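/- Let X_• be a semi-simplicial set with H^n_b(X_•) = 0 for some n ≥ 1. Then the n-th vanishing modulus of X_•, defined as sup over norm-one bounded n-cocycles c of the infimum of ‖b‖_∞ over bounded (n−1)-cochains b with db = c, is finite. -/

import Mathlib

/-- A real-valued function is bounded. -/
def IsBddFun {α : Type*} (f : α → ℝ) : Prop := ∃ C : ℝ, ∀ x, |f x| ≤ C

/-- The alternating-sum coboundary of a semi-simplicial set with `n`-simplices `X n` and
face maps `d`. -/
noncomputable def ssCoboundary {X : ℕ → Type*}
    (d : ∀ n : ℕ, Fin (n + 2) → X (n + 1) → X n) (n : ℕ)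
    (c : X n → ℝ) : X (n + 1) → ℝ :=
  fun σ => ∑ i : Fin (n + 2), (-1 : ℝ) ^ (i : ℕ) * c (d n i σ)

open scoped ENNReal

section aux

variable {X : ℕ → Type*} (d : ∀ n : ℕ, Fin (n + 2) → X (n + 1) → X n)

lemma ssCoboundary_abs_le (m : ℕ) (f : X m → ℝ) (C : ℝ) (hf : ∀ x, |f x| ≤ C)
    (σ : X (m + 1)) : |ssCoboundary d m f σ| ≤ (m + 2) * C := by
  unfold ssCoboundary
  calc |∑ i : Fin (m + 2), (-1 : ℝ) ^ (i : ℕ) * f (d m i σ)|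
      ≤ ∑ i : Fin (m + 2), |(-1 : ℝ) ^ (i : ℕ) * f (d m i σ)| :=
        Finset.abs_sum_le_sum_abs _ _
    _ ≤ ∑ _i : Fin (m + 2), C := by
        refine Finset.sum_le_sum fun i _ => ?_
        rw [abs_mul, abs_pow, abs_neg, abs_one, one_pow, one_mul]
        exact hf _
    _ = (m + 2) * C := by simp [Finset.sum_const, mul_comm]

lemma memℓp_ssCoboundary (m : ℕ) (f : lp (fun _ : X m => ℝ) ∞) :
    Memℓp (ssCoboundary d m (f : ∀ _ : X m, ℝ)) ∞ := by
  apply memℓp_infty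
  refine ⟨(m + 2) * ‖f‖, ?_⟩
  rintro x ⟨σ, rfl⟩
  simp only [Real.norm_eq_abs]
  exact ssCoboundary_abs_le d m _ ‖f‖
    (fun x => lp.norm_apply_le_norm ENNReal.top_ne_zero f x) σ

/-- Coboundary as a continuous linear map between `ℓ^∞` spaces. -/
noncomputable def cobdL (m : ℕ) :
    lp (fun _ : X m => ℝ) ∞ →L[ℝ] lp (fun _ : X (m + 1) => ℝ) ∞ :=
  LinearMap.mkContinuous
    { toFun := fun f => ⟨ssCoboundary d m (f : ∀ _ : X m, ℝ), memℓp_ssCoboundary d m f⟩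
      map_add' := by
        intro f g
        ext σ
        simp [ssCoboundary, lp.coeFn_add, Pi.add_apply, mul_add, Finset.sum_add_distrib]
        rfl
      map_smul' := by
        intro c f
        ext σ
        simp [ssCoboundary, lp.coeFn_smul, Pi.smul_apply, smul_eq_mul, Finset.mul_sum]
        congr 1
        ext i
        ring }
    ((m : ℝ) + 2)
    (by
      intro f
      refine lp.norm_le_of_forall_le (by positivity) fun σ => ?_
      simp only [Real.norm_eq_abs]
      exact (ssCoboundary_abs_le d m _ ‖f‖
        (fun x => lp.norm_apply_le_norm ENNReal.top_ne_zero f x) σ).trans (by ring_nf; rfl))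

lemma cobdL_apply (m : ℕ) (f : lp (fun _ : X m => ℝ) ∞) :
    ((cobdL d m f : lp (fun _ : X (m + 1) => ℝ) ∞) : ∀ _ : X (m + 1), ℝ)
      = ssCoboundary d m (f : ∀ _ : X m, ℝ) := rfl

end aux

set_option maxHeartbeats 1000000 in
set_option synthInstance.maxHeartbeats 400000 in
/-- if `X_•` is a semi-simplicial set with `H^n_b(X_•) = 0` for some `n ≥ 1`
(every bounded `n`-cocycle is the coboundary of a bounded `(n-1)`-cochain), then the `n`-th
vanishing modulus of `X_•` is finite: there is a uniform constant `C` such that every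
bounded `n`-cocycle of sup-norm at most `1` is the coboundary of a bounded cochain of
sup-norm at most `C`.  (Stated with `n` replaced by `n+1 ≥ 1`.) -/
theorem vanishing_modulus_finite {X : ℕ → Type*}
    (d : ∀ n : ℕ, Fin (n + 2) → X (n + 1) → X n) (n : ℕ)
    (hvan : ∀ c : X (n + 1) → ℝ, IsBddFun c → ssCoboundary d (n + 1) c = 0 →
      ∃ b : X n → ℝ, IsBddFun b ∧ ssCoboundary d n b = c) :
    ∃ C : ℝ, ∀ c : X (n + 1) → ℝ, (∀ σ, |c σ| ≤ 1) → ssCoboundary d (n + 1) c = 0 →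
      ∃ b : X n → ℝ, (∀ τ, |b τ| ≤ C) ∧ ssCoboundary d n b = c := by
  classical
  set T := cobdL d n with hT
  set D := cobdL d (n + 1) with hD
  -- W = kernel of D ∘ T, Z = kernel of D; both are Banach spaces
  set W := (D.comp T).ker with hW
  set Z := D.ker with hZ
  haveI : CompleteSpace W := (ContinuousLinearMap.isClosed_ker (D.comp T)).completeSpace_coe
  haveI : CompleteSpace Z := (ContinuousLinearMap.isClosed_ker D).completeSpace_coe
  -- the restricted map S : W → Z
  have hmem : ∀ w : W, T (w : lp (fun _ : X n => ℝ) ∞) ∈ Z := by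
    intro w
    have h2 : (D.comp T) (w : lp (fun _ : X n => ℝ) ∞) = 0 := LinearMap.mem_ker.mp w.2
    rw [ContinuousLinearMap.comp_apply] at h2
    exact LinearMap.mem_ker.mpr h2
  let S : W →L[ℝ] Z :=
    ContinuousLinearMap.codRestrict (T.comp (Submodule.subtypeL W)) Z (fun w => hmem w)
  have hsurj : Function.Surjective S := by
    rintro ⟨z, hz⟩
    have hzc : ssCoboundary d (n + 1) (z : ∀ _ : X (n + 1), ℝ) = 0 := by
      have : ((D z : lp (fun _ : X (n + 2) => ℝ) ∞) : ∀ _ : X (n + 2), ℝ) = 0 := by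
        rw [show D z = 0 from hz]; exact lp.coeFn_zero _ _
      rwa [cobdL_apply] at this
    have hzb : IsBddFun (z : ∀ _ : X (n + 1), ℝ) :=
      ⟨‖z‖, fun x => lp.norm_apply_le_norm ENNReal.top_ne_zero z x⟩
    obtain ⟨b, ⟨Cb, hCb⟩, hb⟩ := hvan _ hzb hzc
    have hbmem : Memℓp b ∞ := by
      apply memℓp_infty
      exact ⟨Cb, by rintro x ⟨τ, rfl⟩; exact hCb τ⟩
    set bf : lp (fun _ : X n => ℝ) ∞ := ⟨b, hbmem⟩ with hbf
    have hTb : T bf = z := by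
      apply lp.ext
      rw [cobdL_apply]
      exact hb
    have hbW : bf ∈ W := by
      simp only [hW, LinearMap.mem_ker, ContinuousLinearMap.coe_coe, ContinuousLinearMap.coe_comp', Function.comp_apply]
      rw [hTb]
      exact hz
    refine ⟨⟨bf, hbW⟩, ?_⟩
    apply Subtype.ext
    exact hTb
  obtain ⟨C, hCpos, hC⟩ := S.exists_preimage_norm_le hsurj
  refine ⟨C, fun c hc hcoc => ?_⟩
  have hcmem : Memℓp c ∞ := memℓp_infty ⟨1, by rintro x ⟨σ, rfl⟩; exact hc σ⟩
  set cf : lp (fun _ : X (n + 1) => ℝ) ∞ := ⟨c, hcmem⟩ with hcf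
  have hcZ : cf ∈ Z := by
    simp only [hZ, LinearMap.mem_ker, ContinuousLinearMap.coe_coe]
    apply lp.ext
    rw [cobdL_apply]
    exact hcoc
  obtain ⟨w, hw, hwn⟩ := hC ⟨cf, hcZ⟩
  have hznorm : ‖(⟨cf, hcZ⟩ : Z)‖ ≤ 1 := by
    show ‖cf‖ ≤ 1
    exact lp.norm_le_of_forall_le zero_le_one fun σ => hc σ
  refine ⟨((w : lp (fun _ : X n => ℝ) ∞) : ∀ _ : X n, ℝ), fun τ => ?_, ?_⟩
  · calc |((w : lp (fun _ : X n => ℝ) ∞) : ∀ _ : X n, ℝ) τ|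
        ≤ ‖(w : lp (fun _ : X n => ℝ) ∞)‖ := by
          rw [← Real.norm_eq_abs]
          exact lp.norm_apply_le_norm ENNReal.top_ne_zero _ τ
      _ = ‖w‖ := Submodule.norm_coe w
      _ ≤ C * ‖(⟨cf, hcZ⟩ : Z)‖ := hwn
      _ ≤ C * 1 := mul_le_mul_of_nonneg_left hznorm hCpos.le
      _ = C := mul_one C
  · have : T (w : lp (fun _ : X n => ℝ) ∞) = cf := congrArg Subtype.val hw
    calc ssCoboundary d n _ = ((T (w : lp (fun _ : X n => ℝ) ∞) :
          lp (fun _ : X (n + 1) => ℝ) ∞) : ∀ _ : X (n + 1), ℝ) := (cobdL_apply d n _).symm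
      _ = c := by rw [this]
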